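/- Let V be a real inner product space, and let a : V × V → ℝ be a symmetric positive semidefinite bilinear form. Let τ > 0, θ ≥ 1/2, and η⁰, η¹, r ∈ V. If for every v ∈ V one has ⟪(η¹ - η⁰)/τ, v⟫ + a(θ η¹ + (1-θ) η⁰, v) = ⟪r, v⟫, then a(η¹, η¹) ≤ a(η⁰, η⁰) + τ ‖r‖². -/

import Mathlib

open scoped RealInnerProductSpace

/-- One-step energy-norm estimate for the θ-scheme error recursion, `θ ≥ 1/2`:
`a(η¹, η¹) ≤ a(η⁰, η⁰) + τ ‖r‖²`. -/
theorem theta_scheme_one_step_energy_estimate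
    {V : Type*} [NormedAddCommGroup V] [InnerProductSpace ℝ V]
    (a : V →ₗ[ℝ] V →ₗ[ℝ] ℝ)
    (hsym : ∀ x y : V, a x y = a y x)
    (hpos : ∀ v : V, 0 ≤ a v v)
    (τ θ : ℝ) (hτ : 0 < τ) (hθ : 1 / 2 ≤ θ)
    (η0 η1 r : V)
    (h : ∀ v : V, ⟪(1 / τ) • (η1 - η0), v⟫ + a (θ • η1 + (1 - θ) • η0) v = ⟪r, v⟫) :
    a η1 η1 ≤ a η0 η0 + τ * ‖r‖ ^ 2 := by
  set w := η1 - η0 with hw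
  have heq := h w
  rw [real_inner_smul_left, real_inner_self_eq_norm_sq] at heq
  have hexp : a (θ • η1 + (1 - θ) • η0) w
      = θ * a η1 η1 + (1 - 2 * θ) * (a η1 η0) - (1 - θ) * a η0 η0 := by
    have h01 : a η0 η1 = a η1 η0 := hsym η0 η1
    simp only [hw, map_add, map_smul, map_sub, LinearMap.add_apply, LinearMap.smul_apply,
      LinearMap.sub_apply, smul_eq_mul]
    ring_nf
    rw [h01]
    ring
  rw [hexp] at heq
  have hcs : ⟪r, w⟫ ≤ ‖r‖ * ‖w‖ := real_inner_le_norm r w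
  have hposw : 0 ≤ a η1 η1 - 2 * a η1 η0 + a η0 η0 := by
    have := hpos w
    have h01 : a η0 η1 = a η1 η0 := hsym η0 η1
    simp only [hw, map_sub, LinearMap.sub_apply] at this
    linarith [this]
  have hsq : 0 ≤ (‖w‖ - τ * ‖r‖) ^ 2 := sq_nonneg _
  have hnw : 0 ≤ ‖w‖ := norm_nonneg w
  have key : τ * (θ * a η1 η1 + (1 - 2 * θ) * a η1 η0 - (1 - θ) * a η0 η0) + ‖w‖ ^ 2
      = τ * ⟪r, w⟫ := by
    field_simp at heq
    nlinarith [heq]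
  have hcs' : τ * ⟪r, w⟫ ≤ τ * (‖r‖ * ‖w‖) := mul_le_mul_of_nonneg_left hcs hτ.le
  have hθpos : 0 ≤ τ * (2 * θ - 1) := mul_nonneg hτ.le (by linarith)
  have hfin : τ * (a η1 η1 - a η0 η0 - τ * ‖r‖ ^ 2) ≤ τ * 0 := by
    nlinarith [mul_nonneg hθpos hposw, key, hcs', hsq]
  have := (mul_le_mul_iff_right₀ hτ).mp hfin
  linarith
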